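/- There is no constant C ≥ 0 such that for every δ ∈ (0,1), every a ∈ M₂(ℂ) with ‖a‖ ≤ 1 and ‖a a* − a* a‖ ≤ δ (operator norm), and every finitely supported family of complex coefficients p, one has ‖p(a,a*)‖ ≤ p_max + C·δ. In fact, for the matrix a = [[0, √δ],[0,0]] ∈ M₂(ℂ) and every ε ∈ (0,1) there exists a finitely supported coefficient family p with p_max ≤ 2 + ε² and ‖p(a,a*)‖ = √δ/ε. -/

import Mathlib

open scoped ComplexConjugate Matrix.Norms.L2Operator

/-- Evaluation of a finitely supported coefficient family `p = (p_{kl})` at an element `a`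
of a star `ℂ`-algebra: `p(a,a*) = ∑ p_{kl} a^k (a*)^l`. -/
noncomputable def polyEvalA {A : Type*} [Ring A] [StarRing A] [Algebra ℂ A]
    (p : (ℕ × ℕ) →₀ ℂ) (a : A) : A :=
  p.sum fun kl c => c • (a ^ kl.1 * star a ^ kl.2)

/-- The function `z ↦ p(z, z̄) = ∑ p_{kl} z^k conj(z)^l`. -/
noncomputable def polyEvalC (p : (ℕ × ℕ) →₀ ℂ) (z : ℂ) : ℂ :=
  p.sum fun kl c => c * z ^ kl.1 * (conj z) ^ kl.2

/-- `p_max = sup_{|z| ≤ 1} |p(z, z̄)|`. -/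
noncomputable def polyMax (p : (ℕ × ℕ) →₀ ℂ) : ℝ :=
  sSup ((fun z => ‖polyEvalC p z‖) '' Metric.closedBall (0 : ℂ) 1)

/-! ### Auxiliary lemmas -/

lemma stmt9_key_ineq (n : ℕ) (hn : 1 ≤ n) (r : ℝ) (hr0 : 0 ≤ r) (hr1 : r ≤ 1) :
    r * (1 - r ^ 2) ^ n ≤ 1 / Real.sqrt n := by
  have hr2 : r ^ 2 ≤ 1 := by nlinarith
  set t := (1 - r ^ 2) ^ n with ht
  have ht0 : 0 ≤ t := pow_nonneg (by nlinarith) n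
  have hb : (1 + n * r ^ 2) * t ≤ 1 := by
    have h1 : 1 + (n : ℝ) * r ^ 2 ≤ (1 + r ^ 2) ^ n := by
      simpa using one_add_mul_le_pow (a := r ^ 2) (by nlinarith) n
    have h2 : (1 + r ^ 2) ^ n * t = ((1 + r ^ 2) * (1 - r ^ 2)) ^ n := by
      rw [ht, ← mul_pow]
    have h3 : ((1 + r ^ 2) * (1 - r ^ 2)) ^ n ≤ 1 :=
      pow_le_one₀ (by nlinarith [sq_nonneg r, sq_nonneg (r ^ 2)])
        (by nlinarith [sq_nonneg r, sq_nonneg (r ^ 2)])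
    nlinarith [mul_le_mul_of_nonneg_right h1 ht0]
  have hs : Real.sqrt n * Real.sqrt n = n := Real.mul_self_sqrt (by positivity)
  have hs0 : (0:ℝ) ≤ Real.sqrt n := Real.sqrt_nonneg _
  have hspos : (0:ℝ) < Real.sqrt n := by
    rw [Real.sqrt_pos]; exact_mod_cast hn
  rw [le_div_iff₀ hspos]
  have hA : Real.sqrt n * r ≤ 1 + n * r ^ 2 := by
    nlinarith [sq_nonneg (Real.sqrt n * r - 1), mul_nonneg hs0 hr0]
  calc r * t * Real.sqrt n = (Real.sqrt n * r) * t := by ring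
    _ ≤ (1 + n * r ^ 2) * t := mul_le_mul_of_nonneg_right hA ht0
    _ ≤ 1 := hb

lemma stmt9_normP : ‖(!![0,0;0,(1:ℂ)] : Matrix (Fin 2) (Fin 2) ℂ)‖ = 1 := by
  set P : Matrix (Fin 2) (Fin 2) ℂ := !![0,0;0,1] with hP
  have hstar : star P = P := by
    ext i j; fin_cases i <;> fin_cases j <;> simp [hP, Matrix.star_apply]
  have hmul : P * P = P := by
    ext i j; fin_cases i <;> fin_cases j <;> simp [hP, Matrix.mul_apply, Fin.sum_univ_two]
  have h : ‖P‖ * ‖P‖ = ‖P‖ := by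
    rw [← CStarRing.norm_star_mul_self (x := P), hstar, hmul]
  have hne : P ≠ 0 := by
    intro h; have := congrFun (congrFun h 1) 1; simp [hP] at this
  have h0 : ‖P‖ ≠ 0 := by simpa using hne
  exact mul_right_cancel₀ h0 (h.trans (one_mul ‖P‖).symm)

lemma stmt9_normD : ‖(!![1,0;0,(-1:ℂ)] : Matrix (Fin 2) (Fin 2) ℂ)‖ = 1 := by
  set D : Matrix (Fin 2) (Fin 2) ℂ := !![1,0;0,-1] with hD
  have hstar : star D = D := by
    ext i j; fin_cases i <;> fin_cases j <;> simp [hD, Matrix.star_apply]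
  have hmul : D * D = 1 := by
    ext i j; fin_cases i <;> fin_cases j <;>
      simp [hD, Matrix.mul_apply, Fin.sum_univ_two, Matrix.one_apply]
  have h : ‖D‖ * ‖D‖ = 1 := by
    rw [← CStarRing.norm_star_mul_self (x := D), hstar, hmul, norm_one]
  have h0 : 0 ≤ ‖D‖ := norm_nonneg _
  nlinarith [sq_nonneg (‖D‖ - 1), sq_nonneg (‖D‖ + 1)]

lemma stmt9_star_a (s : ℝ) :
    star (!![0,(s:ℂ);0,0] : Matrix (Fin 2) (Fin 2) ℂ) = !![0,0;(s:ℂ),0] := by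
  ext i j; fin_cases i <;> fin_cases j <;> simp [Matrix.star_apply]

lemma stmt9_sq_a (s : ℝ) : (!![0,(s:ℂ);0,0] : Matrix (Fin 2) (Fin 2) ℂ) ^ 2 = 0 := by
  rw [pow_two]
  ext i j; fin_cases i <;> fin_cases j <;> simp [Matrix.mul_apply, Fin.sum_univ_two]

lemma stmt9_norm_a (s : ℝ) (hs : 0 ≤ s) :
    ‖(!![0,(s:ℂ);0,0] : Matrix (Fin 2) (Fin 2) ℂ)‖ = s := by
  set a : Matrix (Fin 2) (Fin 2) ℂ := !![0,(s:ℂ);0,0] with ha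
  have hmul : star a * a = ((s^2 : ℝ) : ℂ) • !![0,0;0,(1:ℂ)] := by
    rw [stmt9_star_a]
    ext i j; fin_cases i <;> fin_cases j <;>
      simp [ha, Matrix.mul_apply, Fin.sum_univ_two, Matrix.smul_apply] <;> push_cast <;> ring
  have h : ‖a‖ * ‖a‖ = s * s := by
    rw [← CStarRing.norm_star_mul_self (x := a), hmul, norm_smul, stmt9_normP]
    simp [abs_of_nonneg (sq_nonneg s : (0:ℝ) ≤ s^2)]
    ring
  have h0 : 0 ≤ ‖a‖ := norm_nonneg _
  nlinarith [sq_nonneg (‖a‖ - s), sq_nonneg (‖a‖ + s)]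

lemma stmt9_norm_comm (s : ℝ) :
    ‖(!![0,(s:ℂ);0,0] : Matrix (Fin 2) (Fin 2) ℂ) *
        star (!![0,(s:ℂ);0,0] : Matrix (Fin 2) (Fin 2) ℂ)
      - star (!![0,(s:ℂ);0,0] : Matrix (Fin 2) (Fin 2) ℂ) *
        (!![0,(s:ℂ);0,0] : Matrix (Fin 2) (Fin 2) ℂ)‖ = s ^ 2 := by
  set a : Matrix (Fin 2) (Fin 2) ℂ := !![0,(s:ℂ);0,0] with ha
  have hcomm : a * star a - star a * a = ((s^2 : ℝ) : ℂ) • !![1,0;0,(-1:ℂ)] := by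
    rw [stmt9_star_a]
    ext i j; fin_cases i <;> fin_cases j <;>
      simp [ha, Matrix.mul_apply, Fin.sum_univ_two, Matrix.smul_apply, Matrix.sub_apply] <;>
      push_cast <;> ring
  rw [hcomm, norm_smul, stmt9_normD]
  simp [abs_of_nonneg (sq_nonneg s)]

lemma stmt9_finsupp_sum_finset_sum {M : Type*} [AddCommMonoid M] (s : Finset ℕ)
    (g : ℕ → ℕ × ℕ) (c : ℕ → ℂ) (f : ℕ × ℕ → ℂ → M) (h0 : ∀ kl, f kl 0 = 0)
    (hadd : ∀ kl x y, f kl (x + y) = f kl x + f kl y) :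
    (∑ k ∈ s, Finsupp.single (g k) (c k)).sum f = ∑ k ∈ s, f (g k) (c k) := by
  induction s using Finset.cons_induction with
  | empty => simp
  | cons a s ha ih =>
    rw [Finset.sum_cons, Finsupp.sum_add_index' h0 hadd,
      Finsupp.sum_single_index (h0 _), ih, Finset.sum_cons]

/-- `n = ⌈ε⁻²⌉`. -/
noncomputable def stmt9_nn (ε : ℝ) : ℕ := ⌈(ε⁻¹) ^ 2⌉₊

/-- The coefficient family of `ε⁻¹ z (1 - z z̄)^n`. -/
noncomputable def stmt9_pp (ε : ℝ) : (ℕ × ℕ) →₀ ℂ :=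
  ∑ k ∈ Finset.range (stmt9_nn ε + 1),
    Finsupp.single (k + 1, k) (((ε⁻¹ : ℝ) : ℂ) * ((-1) ^ k * ((stmt9_nn ε).choose k)))

lemma stmt9_evalC_pp (ε : ℝ) (z : ℂ) :
    polyEvalC (stmt9_pp ε) z = ((ε⁻¹ : ℝ) : ℂ) * z * (1 - z * conj z) ^ (stmt9_nn ε) := by
  rw [polyEvalC, stmt9_pp, stmt9_finsupp_sum_finset_sum _ _ _ _ (fun kl => by simp)
    (fun kl x y => by ring)]
  have h1 : ((1 : ℂ) - z * conj z) ^ (stmt9_nn ε) = (-(z * conj z) + 1) ^ (stmt9_nn ε) := by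
    ring_nf
  rw [h1, add_pow, Finset.mul_sum]
  refine Finset.sum_congr rfl fun k _ => ?_
  have h2 : (-(z * conj z)) ^ k = (-1) ^ k * (z ^ k * (conj z) ^ k) := by
    rw [neg_pow, mul_pow]
  rw [h2, one_pow]
  push_cast
  ring

lemma stmt9_evalA_pp (ε : ℝ) (a : Matrix (Fin 2) (Fin 2) ℂ) (ha : a ^ 2 = 0) :
    polyEvalA (stmt9_pp ε) a = ((ε⁻¹ : ℝ) : ℂ) • a := by
  rw [polyEvalA, stmt9_pp, stmt9_finsupp_sum_finset_sum _ _ _ _ (fun kl => by simp)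
    (fun kl x y => by rw [add_smul])]
  rw [Finset.sum_eq_single_of_mem 0 (Finset.mem_range.2 (Nat.succ_pos _))]
  · simp
  · intro k hk hk0
    have h1 : a ^ (k + 1) = a ^ 2 * a ^ (k - 1) := by
      rw [← pow_add]; congr 1; omega
    rw [h1, ha, zero_mul, zero_mul, smul_zero]

lemma stmt9_polyMax_pp (ε : ℝ) (hε0 : 0 < ε) (hε1 : ε < 1) :
    polyMax (stmt9_pp ε) ≤ 2 + ε ^ 2 := by
  have hi : (0:ℝ) < ε⁻¹ := inv_pos.2 hε0
  have hεinv : (1:ℝ) ≤ ε⁻¹ := by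
    nlinarith [mul_inv_cancel₀ hε0.ne']
  have hnn : ((ε⁻¹) ^ 2 : ℝ) ≤ stmt9_nn ε := Nat.le_ceil _
  have hn1 : 1 ≤ stmt9_nn ε := by
    rw [Nat.one_le_iff_ne_zero]
    intro h
    rw [h] at hnn
    simp at hnn
    nlinarith
  have hsq : ε⁻¹ ≤ Real.sqrt (stmt9_nn ε) := by
    have h := Real.sqrt_le_sqrt hnn
    rwa [Real.sqrt_sq (by positivity)] at h
  have hsqpos : (0:ℝ) < Real.sqrt (stmt9_nn ε) := lt_of_lt_of_le hi hsq
  apply Real.sSup_le _ (by positivity)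
  rintro x ⟨z, hz, rfl⟩
  have hz1 : ‖z‖ ≤ 1 := by
    simpa [Metric.mem_closedBall, dist_zero_right] using hz
  have hz2 : ‖z‖ ^ 2 ≤ 1 := by nlinarith [norm_nonneg z]
  simp only
  rw [stmt9_evalC_pp]
  have hzc : (1:ℂ) - z * conj z = (((1 - ‖z‖ ^ 2 : ℝ)) : ℂ) := by
    rw [Complex.mul_conj]
    push_cast
    rw [Complex.normSq_eq_norm_sq]
    push_cast
    ring
  rw [hzc, norm_mul, norm_mul, norm_pow, Complex.norm_real, Complex.norm_real,
    Real.norm_eq_abs, Real.norm_eq_abs, abs_of_nonneg hi.le, abs_of_nonneg (by nlinarith [norm_nonneg z] : (0:ℝ) ≤ 1 - ‖z‖ ^ 2)]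
  have hkey := stmt9_key_ineq _ hn1 ‖z‖ (norm_nonneg z) hz1
  calc ε⁻¹ * ‖z‖ * (1 - ‖z‖ ^ 2) ^ (stmt9_nn ε)
      ≤ ε⁻¹ * (1 / Real.sqrt (stmt9_nn ε)) := by
        rw [mul_assoc]; exact mul_le_mul_of_nonneg_left hkey hi.le
    _ ≤ ε⁻¹ * ε := by
        refine mul_le_mul_of_nonneg_left ?_ hi.le
        rw [div_le_iff₀ hsqpos]
        calc (1:ℝ) = ε * ε⁻¹ := (mul_inv_cancel₀ hε0.ne').symm
          _ ≤ ε * Real.sqrt (stmt9_nn ε) := mul_le_mul_of_nonneg_left hsq hε0.le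
    _ = 1 := by field_simp
    _ ≤ 2 + ε ^ 2 := by nlinarith

/-- `M₂(ℂ)`, carrying the (`L²`-)operator norm. -/
theorem stmt9 :
    (¬ ∃ C : ℝ, 0 ≤ C ∧
        ∀ δ : ℝ, 0 < δ → δ < 1 →
          ∀ a : Matrix (Fin 2) (Fin 2) ℂ, ‖a‖ ≤ 1 → ‖a * star a - star a * a‖ ≤ δ →
            ∀ p : (ℕ × ℕ) →₀ ℂ, ‖polyEvalA p a‖ ≤ polyMax p + C * δ) ∧
    (∀ δ : ℝ, 0 < δ → δ < 1 → ∀ ε : ℝ, 0 < ε → ε < 1 →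
        ∃ p : (ℕ × ℕ) →₀ ℂ, polyMax p ≤ 2 + ε ^ 2 ∧
          ‖polyEvalA p (!![0, (Real.sqrt δ : ℂ); 0, 0])‖ = Real.sqrt δ / ε) := by
  have key : ∀ δ : ℝ, 0 < δ → δ < 1 → ∀ ε : ℝ, 0 < ε → ε < 1 →
      ∃ p : (ℕ × ℕ) →₀ ℂ, polyMax p ≤ 2 + ε ^ 2 ∧
        ‖polyEvalA p (!![0, (Real.sqrt δ : ℂ); 0, 0])‖ = Real.sqrt δ / ε := by
    intro δ hδ0 hδ1 ε hε0 hε1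
    refine ⟨stmt9_pp ε, stmt9_polyMax_pp ε hε0 hε1, ?_⟩
    rw [stmt9_evalA_pp ε _ (stmt9_sq_a _), norm_smul, Complex.norm_real, Real.norm_eq_abs,
      abs_of_nonneg (by positivity : (0:ℝ) ≤ ε⁻¹), stmt9_norm_a _ (Real.sqrt_nonneg _),
      div_eq_mul_inv]
    ring
  refine ⟨?_, key⟩
  rintro ⟨C, hC0, hC⟩
  set ε : ℝ := 1 / (C + 7) with hε
  have hε0 : 0 < ε := by positivity
  have hε1 : ε < 1 := by rw [hε, div_lt_one (by linarith)]; linarith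
  obtain ⟨p, hp1, hp2⟩ := key (1/2) (by norm_num) (by norm_num) ε hε0 hε1
  set s := Real.sqrt (1/2) with hs
  have hs0 : 0 ≤ s := Real.sqrt_nonneg _
  have hs2 : s ^ 2 = 1/2 := Real.sq_sqrt (by norm_num)
  have hs_half : 1/2 ≤ s := by nlinarith
  have h1 : ‖(!![0,(s:ℂ);0,0] : Matrix (Fin 2) (Fin 2) ℂ)‖ ≤ 1 := by
    rw [stmt9_norm_a s hs0]; nlinarith
  have h2 : ‖(!![0,(s:ℂ);0,0] : Matrix (Fin 2) (Fin 2) ℂ) *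
      star (!![0,(s:ℂ);0,0] : Matrix (Fin 2) (Fin 2) ℂ)
      - star (!![0,(s:ℂ);0,0] : Matrix (Fin 2) (Fin 2) ℂ) *
      (!![0,(s:ℂ);0,0] : Matrix (Fin 2) (Fin 2) ℂ)‖ ≤ 1/2 := by
    rw [stmt9_norm_comm s, hs2]
  have h3 := hC (1/2) (by norm_num) (by norm_num) _ h1 h2 p
  rw [hp2] at h3
  have hdiv : s / ε = s * (C + 7) := by rw [hε]; field_simp
  have hε2 : ε ^ 2 ≤ 1 := by nlinarith
  rw [hdiv] at h3
  nlinarith [mul_le_mul_of_nonneg_right hs_half (by linarith : (0:ℝ) ≤ C + 7)]
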